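/- In F[[z]], Heine's continued fraction holds: ₂φ₁(aq,b;cq;q,z) / ₂φ₁(a,b;c;q,z) = 1/(1 − β_1 z/(1 − β_2 z/(1 − β_3 z/(1 − ⋯)))), where β_{2n+1} := (1 − bq^n)(a − cq^n)q^n / ((1 − cq^{2n})(1 − cq^{2n+1})) for n ≥ 0 and β_{2n} := (1 − aq^n)(b − cq^n)q^{n−1} / ((1 − cq^{2n−1})(1 − cq^{2n})) for n ≥ 1. -/

import Mathlib

noncomputable section

/-- `F`, the fraction field of `ℚ[q,a,b,c]`. -/
abbrev F : Type := FractionRing (MvPolynomial (Fin 4) ℚ)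

def qv : F := algebraMap (MvPolynomial (Fin 4) ℚ) F (MvPolynomial.X 0)
def av : F := algebraMap (MvPolynomial (Fin 4) ℚ) F (MvPolynomial.X 1)
def bv : F := algebraMap (MvPolynomial (Fin 4) ℚ) F (MvPolynomial.X 2)
def cv : F := algebraMap (MvPolynomial (Fin 4) ℚ) F (MvPolynomial.X 3)

/-- The q-Pochhammer symbol `(u;q)_n`. -/
def qPoch (u : F) (n : ℕ) : F := ∏ j ∈ Finset.range n, (1 - u * qv ^ j)

/-- The basic hypergeometric series `₂φ₁(A,B;C;q,z) ∈ F[[z]]`. -/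
def phi2 (A B C : F) : PowerSeries F :=
  PowerSeries.mk fun n => qPoch A n * qPoch B n / (qPoch qv n * qPoch C n)

/-- Heine's coefficients: `β_{2n+1} = (1−bq^n)(a−cq^n)q^n/((1−cq^{2n})(1−cq^{2n+1}))`
for `n ≥ 0` and `β_{2n} = (1−aq^n)(b−cq^n)q^{n−1}/((1−cq^{2n−1})(1−cq^{2n}))` for
`n ≥ 1`. -/
def betaS (m : ℕ) : F :=
  if m % 2 = 1 then
    (1 - bv * qv ^ (m / 2)) * (av - cv * qv ^ (m / 2)) * qv ^ (m / 2) /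
      ((1 - cv * qv ^ ((m : ℤ) - 1)) * (1 - cv * qv ^ m))
  else
    (1 - av * qv ^ (m / 2)) * (bv - cv * qv ^ (m / 2)) * qv ^ ((m : ℤ) / 2 - 1) /
      ((1 - cv * qv ^ ((m : ℤ) - 1)) * (1 - cv * qv ^ m))

/-- The depth-`N` convergent of the Stieltjes-type continued fraction
`1/(1 − β_1 z/(1 − β_2 z/(⋯ − β_N z/1)))`: `convS β N k` is the tail whose outermost
numerator is `β_{N-k+1}` (with `convS β N 0 = 1`), so the convergent is `convS β N N`. -/
def convS (beta : ℕ → F) (N : ℕ) : ℕ → PowerSeries F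
  | 0 => 1
  | k + 1 => (1 - PowerSeries.C (beta (N - k)) * PowerSeries.X * convS beta N k)⁻¹

-- ===== auxiliary lemmas =====

open PowerSeries

lemma map_one_sub_ne (p : MvPolynomial (Fin 4) ℚ) (hp : MvPolynomial.constantCoeff p = 0) :
    (1 : F) - algebraMap (MvPolynomial (Fin 4) ℚ) F p ≠ 0 := by
  intro h
  have h2 : algebraMap (MvPolynomial (Fin 4) ℚ) F (1 - p) = 0 := by
    rw [map_sub, map_one]; exact h
  have h3 : (1 - p : MvPolynomial (Fin 4) ℚ) = 0 :=
    (map_eq_zero_iff _ (IsFractionRing.injective (MvPolynomial (Fin 4) ℚ) F)).mp h2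
  have h4 := congrArg MvPolynomial.constantCoeff h3
  simp [hp] at h4

lemma one_sub_cq_ne (k : ℕ) : (1 : F) - cv * qv ^ k ≠ 0 := by
  have : cv * qv ^ k =
      algebraMap (MvPolynomial (Fin 4) ℚ) F (MvPolynomial.X 3 * MvPolynomial.X 0 ^ k) := by
    rw [map_mul, map_pow]; rfl
  rw [this]
  exact map_one_sub_ne _ (by simp)

lemma one_sub_qpow_ne (k : ℕ) : (1 : F) - qv * qv ^ k ≠ 0 := by
  have : qv * qv ^ k =
      algebraMap (MvPolynomial (Fin 4) ℚ) F (MvPolynomial.X 0 * MvPolynomial.X 0 ^ k) := by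
    rw [map_mul, map_pow]; rfl
  rw [this]
  exact map_one_sub_ne _ (by simp)

lemma qPoch_succ (u : F) (n : ℕ) : qPoch u (n + 1) = qPoch u n * (1 - u * qv ^ n) :=
  Finset.prod_range_succ _ _

lemma qPoch_succ' (u : F) (n : ℕ) : qPoch u (n + 1) = (1 - u) * qPoch (u * qv) n := by
  rw [qPoch, Finset.prod_range_succ', qPoch, mul_comm]
  congr 1
  · simp
  · apply Finset.prod_congr rfl
    intro j _
    rw [pow_succ']
    ring

lemma qPoch_ne_zero (u : F) (hu : ∀ j : ℕ, (1 : F) - u * qv ^ j ≠ 0) (n : ℕ) :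
    qPoch u n ≠ 0 :=
  Finset.prod_ne_zero_iff.mpr fun j _ => hu j

lemma qPoch_q_ne (n : ℕ) : qPoch qv n ≠ 0 :=
  qPoch_ne_zero _ one_sub_qpow_ne n

lemma shift_ne (C : F) (hC : ∀ j : ℕ, (1 : F) - C * qv ^ j ≠ 0) (j : ℕ) :
    (1 : F) - C * qv * qv ^ j ≠ 0 := by
  have := hC (j + 1)
  rw [pow_succ'] at this
  simpa [mul_assoc] using this

lemma constCoeff_phi2 (A B C : F) : PowerSeries.constantCoeff (phi2 A B C) = 1 := by
  simp [phi2, qPoch]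

lemma core_calc {K : Type} [Field K] (A B C q t P1 P2 Pq Y Z : K)
    (hPq : Pq ≠ 0) (hqt : 1 - q * t ≠ 0) (hC0 : 1 - C ≠ 0) (hC1 : 1 - C * q ≠ 0)
    (hCt : 1 - C * q * t ≠ 0) (hY : Y ≠ 0) (hZ : Z ≠ 0)
    (hrel : (1 - C * q) * Z = Y * (1 - C * q * t)) :
    (1 - A) * P1 * ((1 - B) * P2) / (Pq * (1 - q * t) * ((1 - C) * Y))
      = P1 * (1 - A * q * t) * ((1 - B) * P2) / (Pq * (1 - q * t) * (Y * (1 - C * q * t)))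
        - (1 - B) * (A - C) / ((1 - C) * (1 - C * q)) * (P1 * P2 / (Pq * Z)) := by
  have hD1 : Pq * (1 - q * t) * ((1 - C) * Y) ≠ 0 :=
    mul_ne_zero (mul_ne_zero hPq hqt) (mul_ne_zero hC0 hY)
  have hD2 : Pq * (1 - q * t) * (Y * (1 - C * q * t)) ≠ 0 :=
    mul_ne_zero (mul_ne_zero hPq hqt) (mul_ne_zero hY hCt)
  have hDM : (1 - C) * (1 - C * q) * (Pq * Z) ≠ 0 :=
    mul_ne_zero (mul_ne_zero hC0 hC1) (mul_ne_zero hPq hZ)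
  rw [div_mul_div_comm, div_sub_div _ _ hD2 hDM, div_eq_div_iff hD1 (mul_ne_zero hD2 hDM)]
  linear_combination ((1 - A) * P1 * ((1 - B) * P2) * (Pq * (1 - q * t) * (Y * (1 - C * q * t)))
    - P1 * (1 - A * q * t) * ((1 - B) * P2) * (Pq * (1 - q * t) * ((1 - C) * Y)))
    * Pq * (1 - C) * hrel

lemma heine_core (A B C : F) (hC : ∀ j : ℕ, (1 : F) - C * qv ^ j ≠ 0) :
    phi2 A B C = phi2 (A * qv) B (C * qv)
      - PowerSeries.C ((1 - B) * (A - C) / ((1 - C) * (1 - C * qv)))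
        * PowerSeries.X * phi2 (A * qv) (B * qv) (C * qv * qv) := by
  ext n
  rw [map_sub]
  cases n with
  | zero =>
      simp [phi2, qPoch]
  | succ m =>
      rw [show PowerSeries.C ((1 - B) * (A - C) / ((1 - C) * (1 - C * qv)))
            * PowerSeries.X * phi2 (A * qv) (B * qv) (C * qv * qv)
            = (PowerSeries.C ((1 - B) * (A - C) / ((1 - C) * (1 - C * qv)))
              * phi2 (A * qv) (B * qv) (C * qv * qv)) * PowerSeries.X by ring,
        PowerSeries.coeff_succ_mul_X, PowerSeries.coeff_C_mul]
      rw [phi2, phi2, phi2, PowerSeries.coeff_mk, PowerSeries.coeff_mk, PowerSeries.coeff_mk]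
      have hqp : qPoch qv m ≠ 0 := qPoch_q_ne m
      have hqm : (1 : F) - qv * qv ^ m ≠ 0 := one_sub_qpow_ne m
      have hC0 : (1 : F) - C ≠ 0 := by simpa using hC 0
      have hC1 : (1 : F) - C * qv ≠ 0 := by simpa using hC 1
      have hCm : (1 : F) - C * qv * qv ^ m ≠ 0 := shift_ne C hC m
      have hPC1 : qPoch (C * qv) m ≠ 0 := qPoch_ne_zero _ (shift_ne C hC) m
      have hPC2 : qPoch (C * qv * qv) m ≠ 0 :=
        qPoch_ne_zero _ (shift_ne (C * qv) (shift_ne C hC)) m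
      have h5 := qPoch_succ (C * qv) m
      have h6 := qPoch_succ' (C * qv) m
      have hrel : (1 - C * qv) * qPoch (C * qv * qv) m
          = qPoch (C * qv) m * (1 - C * qv * qv ^ m) := h6.symm.trans h5
      rw [qPoch_succ' A, qPoch_succ' B, qPoch_succ' C, qPoch_succ (A * qv),
        qPoch_succ qv, qPoch_succ (C * qv)]
      exact core_calc A B C qv (qv ^ m) (qPoch (A * qv) m) (qPoch (B * qv) m)
        (qPoch qv m) (qPoch (C * qv) m) (qPoch (C * qv * qv) m)
        hqp hqm hC0 hC1 hCm hPC1 hPC2 hrel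


lemma betaS_odd (n : ℕ) :
    betaS (2 * n + 1) = (1 - bv * qv ^ n) * (av - cv * qv ^ n) * qv ^ n /
      ((1 - cv * qv ^ (2 * n)) * (1 - cv * qv ^ (2 * n + 1))) := by
  have h1 : (2 * n + 1) % 2 = 1 := by omega
  have h2 : (2 * n + 1) / 2 = n := by omega
  have h3 : ((2 * n + 1 : ℕ) : ℤ) - 1 = ((2 * n : ℕ) : ℤ) := by push_cast; ring
  rw [betaS, if_pos h1, h2, h3, zpow_natCast]

lemma betaS_even (n : ℕ) :
    betaS (2 * n + 2) = (1 - av * qv ^ (n + 1)) * (bv - cv * qv ^ (n + 1)) * qv ^ n /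
      ((1 - cv * qv ^ (2 * n + 1)) * (1 - cv * qv ^ (2 * n + 2))) := by
  have h1 : ¬ (2 * n + 2) % 2 = 1 := by omega
  have h2 : (2 * n + 2) / 2 = n + 1 := by omega
  have h3 : ((2 * n + 2 : ℕ) : ℤ) / 2 - 1 = ((n : ℕ) : ℤ) := by push_cast; omega
  have h4 : ((2 * n + 2 : ℕ) : ℤ) - 1 = ((2 * n + 1 : ℕ) : ℤ) := by push_cast; ring
  rw [betaS, if_neg h1, h2, h3, h4, zpow_natCast, zpow_natCast]

/-- The ladder of hypergeometric series. -/
def Gm (m : ℕ) : PowerSeries F :=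
  phi2 (av * qv ^ ((m + 1) / 2)) (bv * qv ^ (m / 2)) (cv * qv ^ m)

lemma phi2_comm (A B C : F) : phi2 A B C = phi2 B A C := by
  ext n
  rw [phi2, phi2, PowerSeries.coeff_mk, PowerSeries.coeff_mk, mul_comm (qPoch A n)]

lemma cshift (s : ℕ) (j : ℕ) : (1 : F) - cv * qv ^ s * qv ^ j ≠ 0 := by
  have := one_sub_cq_ne (s + j)
  rw [pow_add] at this
  simpa [mul_assoc] using this

lemma Gm_rec (m : ℕ) :
    Gm m = Gm (m + 1) - PowerSeries.C (betaS (m + 1)) * PowerSeries.X * Gm (m + 2) := by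
  rcases Nat.even_or_odd m with hm | hm
  · obtain ⟨n, hn⟩ := hm
    have hm2 : m = 2 * n := by omega
    subst hm2
    have e0 : (2 * n + 1) / 2 = n := by omega
    have e1 : 2 * n / 2 = n := by omega
    have e2 : (2 * n + 1 + 1) / 2 = n + 1 := by omega
    have e4 : (2 * n + 2 + 1) / 2 = n + 1 := by omega
    have e5 : (2 * n + 2) / 2 = n + 1 := by omega
    rw [Gm, Gm, Gm, e0, e1, e2, e4, betaS_odd]
    have ha : av * qv ^ n * qv = av * qv ^ (n + 1) := by rw [pow_succ]; ring
    have hb : bv * qv ^ n * qv = bv * qv ^ (n + 1) := by rw [pow_succ]; ring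
    have hc1 : cv * qv ^ (2 * n) * qv = cv * qv ^ (2 * n + 1) := by rw [pow_succ]; ring
    have hc2 : cv * qv ^ (2 * n) * qv * qv = cv * qv ^ (2 * n + 2) := by
      rw [pow_succ, pow_succ]; ring
    have hk : (1 - bv * qv ^ n) * (av * qv ^ n - cv * qv ^ (2 * n)) /
        ((1 - cv * qv ^ (2 * n)) * (1 - cv * qv ^ (2 * n + 1)))
        = (1 - bv * qv ^ n) * (av - cv * qv ^ n) * qv ^ n /
          ((1 - cv * qv ^ (2 * n)) * (1 - cv * qv ^ (2 * n + 1))) := by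
      congr 1
      rw [two_mul, pow_add]
      ring
    have h := heine_core (av * qv ^ n) (bv * qv ^ n) (cv * qv ^ (2 * n)) (cshift (2 * n))
    rw [ha, hb, hc2, hc1, hk] at h
    exact h
  · obtain ⟨n, hn⟩ := hm
    subst hn
    have e0 : (2 * n + 1 + 1) / 2 = n + 1 := by omega
    have e1 : (2 * n + 1) / 2 = n := by omega
    have e2 : (2 * n + 1 + 1 + 1) / 2 = n + 1 := by omega
    have e3 : (2 * n + 1 + 1) / 2 = n + 1 := e0
    have e4 : (2 * n + 1 + 2 + 1) / 2 = n + 2 := by omega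
    have e5 : (2 * n + 1 + 2) / 2 = n + 1 := by omega
    have e6 : 2 * n + 1 + 1 = 2 * n + 2 := rfl
    have e7 : 2 * n + 1 + 2 = 2 * n + 3 := rfl
    rw [Gm, Gm, Gm, e0, e1, e2, e4]
    rw [phi2_comm (av * qv ^ (n + 1)) (bv * qv ^ n),
      phi2_comm (av * qv ^ (n + 1)) (bv * qv ^ (n + 1)),
      phi2_comm (av * qv ^ (n + 2)) (bv * qv ^ (n + 1))]
    have ha : bv * qv ^ n * qv = bv * qv ^ (n + 1) := by rw [pow_succ]; ring
    have hb : av * qv ^ (n + 1) * qv = av * qv ^ (n + 2) := by rw [pow_succ]; ring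
    have hc1 : cv * qv ^ (2 * n + 1) * qv = cv * qv ^ (2 * n + 1 + 1) := by
      rw [pow_succ]; ring
    have hc2 : cv * qv ^ (2 * n + 1) * qv * qv = cv * qv ^ (2 * n + 1 + 2) := by
      rw [pow_succ, pow_succ]; ring
    have hk : (1 - av * qv ^ (n + 1)) * (bv * qv ^ n - cv * qv ^ (2 * n + 1)) /
        ((1 - cv * qv ^ (2 * n + 1)) * (1 - cv * qv ^ (2 * n + 1 + 1)))
        = betaS (2 * n + 1 + 1) := by
      rw [e6, betaS_even]
      congr 1
      rw [show 2 * n + 1 = n + (n + 1) by omega, pow_add]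
      ring
    have h := heine_core (bv * qv ^ n) (av * qv ^ (n + 1)) (cv * qv ^ (2 * n + 1))
      (cshift (2 * n + 1))
    rw [ha, hb, hc2, hc1, hk] at h
    exact h


lemma constCoeff_Gm (m : ℕ) : PowerSeries.constantCoeff (Gm m) = 1 :=
  constCoeff_phi2 _ _ _

/-- The ratios `G_{m+1}/G_m`. -/
def Rl (m : ℕ) : PowerSeries F := Gm (m + 1) * (Gm m)⁻¹

lemma Rl_eq (m : ℕ) :
    Rl m = (1 - PowerSeries.C (betaS (m + 1)) * PowerSeries.X * Rl (m + 1))⁻¹ := by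
  symm
  rw [PowerSeries.inv_eq_iff_mul_eq_one]
  · have h1 : (Gm (m + 1))⁻¹ * Gm (m + 1) = 1 := by
      rw [mul_comm]
      exact PowerSeries.mul_inv_cancel _ (by rw [constCoeff_Gm]; exact one_ne_zero)
    calc Rl m * (1 - PowerSeries.C (betaS (m + 1)) * PowerSeries.X * Rl (m + 1))
        = (Gm (m + 1) - PowerSeries.C (betaS (m + 1)) * PowerSeries.X
            * (Gm (m + 2) * ((Gm (m + 1))⁻¹ * Gm (m + 1)))) * (Gm m)⁻¹ := by
          rw [Rl, Rl]; ring
      _ = Gm m * (Gm m)⁻¹ := by rw [h1, mul_one, ← Gm_rec]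
      _ = 1 := PowerSeries.mul_inv_cancel _ (by rw [constCoeff_Gm]; exact one_ne_zero)
  · simp

lemma constCoeff_one_sub_CX (β : F) (f : PowerSeries F) :
    PowerSeries.constantCoeff (1 - PowerSeries.C β * PowerSeries.X * f) = 1 := by
  simp

lemma inv_sub_inv_key (u v : PowerSeries F)
    (hu : PowerSeries.constantCoeff u ≠ 0) (hv : PowerSeries.constantCoeff v ≠ 0) :
    u⁻¹ - v⁻¹ = u⁻¹ * v⁻¹ * (v - u) := by
  have h1 : u * u⁻¹ = 1 := PowerSeries.mul_inv_cancel _ hu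
  have h2 : v * v⁻¹ = 1 := PowerSeries.mul_inv_cancel _ hv
  calc u⁻¹ - v⁻¹ = (u⁻¹ * (v * v⁻¹)) - ((u * u⁻¹) * v⁻¹) := by rw [h1, h2]; ring
    _ = u⁻¹ * v⁻¹ * (v - u) := by ring

lemma key_dvd : ∀ k N : ℕ, k ≤ N →
    PowerSeries.X ^ k ∣ (Rl (N - k) - convS betaS N k) := by
  intro k
  induction k with
  | zero => intro N _; simp [convS]
  | succ k ih =>
      intro N hk
      have hNk : N - (k + 1) + 1 = N - k := by omega
      have ih2 := ih N (by omega)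
      rw [convS, Rl_eq (N - (k + 1)), hNk]
      set β := betaS (N - k) with hβ
      set u := 1 - PowerSeries.C β * PowerSeries.X * Rl (N - k) with hu
      set v := 1 - PowerSeries.C β * PowerSeries.X * convS betaS N k with hv
      have hcu : PowerSeries.constantCoeff u ≠ 0 := by
        rw [hu, constCoeff_one_sub_CX]; exact one_ne_zero
      have hcv : PowerSeries.constantCoeff v ≠ 0 := by
        rw [hv, constCoeff_one_sub_CX]; exact one_ne_zero
      rw [inv_sub_inv_key u v hcu hcv]
      have hvu : PowerSeries.X ^ (k + 1) ∣ (v - u) := by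
        obtain ⟨t, ht⟩ := ih2
        refine ⟨PowerSeries.C β * t, ?_⟩
        rw [hu, hv]
        have : Rl (N - k) - convS betaS N k = PowerSeries.X ^ k * t := ht
        calc (1 - PowerSeries.C β * PowerSeries.X * convS betaS N k)
              - (1 - PowerSeries.C β * PowerSeries.X * Rl (N - k))
            = PowerSeries.C β * PowerSeries.X * (Rl (N - k) - convS betaS N k) := by ring
          _ = PowerSeries.C β * PowerSeries.X * (PowerSeries.X ^ k * t) := by rw [this]
          _ = PowerSeries.X ^ (k + 1) * (PowerSeries.C β * t) := by ring
      exact Dvd.dvd.mul_left hvu _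

/-- Lemma 6.3 (Heine's continued fraction): `₂φ₁(aq,b;cq;q,z)/₂φ₁(a,b;c;q,z)` agrees
with the depth-`N` convergent of `1/(1 − β_1 z/(1 − β_2 z/(1 − ⋯)))` modulo `z^N`, for
every `N ≥ 1`. -/
theorem heine_continued_fraction :
    ∀ N : ℕ, 1 ≤ N → ∀ i < N,
      PowerSeries.coeff i (phi2 (av * qv) bv (cv * qv) * (phi2 av bv cv)⁻¹)
        = PowerSeries.coeff i (convS betaS N N) := by
  intro N _ i hi
  have h0 : phi2 (av * qv) bv (cv * qv) * (phi2 av bv cv)⁻¹ = Rl 0 := by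
    rw [Rl, Gm, Gm]
    norm_num
  have hd := key_dvd N N le_rfl
  rw [Nat.sub_self] at hd
  have := (PowerSeries.X_pow_dvd_iff.mp hd) i hi
  rw [map_sub, sub_eq_zero] at this
  rw [h0]
  exact this

end
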